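/- Let A ⊆ Q be λ-measurable with 0 < λ(A) < ∞ and set δ := inf_{x ∈ A} d(x). Let S be an expanding search on Q such that x ↦ T(S,x) is λ-measurable, and suppose that for every t, if S(t) ∩ A ≠ ∅ then λ(S(t) \ A) ≥ δ (this holds on a network, where each S(t) is a connected set containing O). Then (1/λ(A)) ∫_A T(S,x) dλ(x) ≥ δ + λ(A)/2; that is, the expected search time of S against a Hider distributed uniformly on A is at least δ + λ(A)/2. -/

import Mathlib

open MeasureTheory Metric

/-- The (expanding) search time of the point `H` under the search `S`: the infimum of the
admissible times `t` (i.e. `0 ≤ t < λ(Q)`) with `H ∈ S t`, equal to `∞` if there is none. -/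
noncomputable def searchTime {Q : Type*} [MetricSpace Q] [MeasurableSpace Q]
    (μ : Measure Q) (S : ℝ → Set Q) (H : Q) : ENNReal :=
  ⨅ (t : ℝ) (_ : 0 ≤ t ∧ ENNReal.ofReal t < μ Set.univ ∧ H ∈ S t), ENNReal.ofReal t

/-- `S` is an expanding search on `Q` rooted at `O`: a family of measurable connected subsets
`S t` for `0 ≤ t < λ(Q)` with `S 0 = {O}`, nondecreasing in `t`, and `λ (S t) = t`. -/
def IsExpandingSearch {Q : Type*} [MetricSpace Q] [MeasurableSpace Q]
    (μ : Measure Q) (O : Q) (S : ℝ → Set Q) : Prop :=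
  S 0 = {O} ∧
  (∀ t : ℝ, 0 ≤ t → ENNReal.ofReal t < μ Set.univ →
    MeasurableSet (S t) ∧ IsConnected (S t) ∧ μ (S t) = ENNReal.ofReal t) ∧
  (∀ t t' : ℝ, 0 ≤ t → t ≤ t' → ENNReal.ofReal t' < μ Set.univ → S t ⊆ S t')

/-- Let `A` be measurable with `0 < λ(A) < ∞` and `δ = inf_{x ∈ A} d(x)`.
If `S` is an expanding search (with measurable search-time function) such that whenever
`S(t)` meets `A` one has `λ(S(t) \ A) ≥ δ`, then the expected search time of `S` against a
Hider uniform on `A` is at least `δ + λ(A)/2`. -/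
theorem uniform_hider_offset_lower_bound
    {Q : Type*} [MetricSpace Q] [MeasurableSpace Q]
    (μ : Measure Q) (O : Q) (S : ℝ → Set Q) (hS : IsExpandingSearch μ O S)
    (hmeas : Measurable (searchTime μ S))
    (A : Set Q) (hA : MeasurableSet A) (hpos : 0 < μ A) (hfin : μ A < ⊤)
    (hδ : ∀ t : ℝ, 0 ≤ t → ENNReal.ofReal t < μ Set.univ → (S t ∩ A).Nonempty →
      ENNReal.ofReal (sInf ((fun x => dist O x) '' A)) ≤ μ (S t \ A)) :
    ENNReal.ofReal (sInf ((fun x => dist O x) '' A)) + μ A / 2 ≤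
      (∫⁻ x in A, searchTime μ S x ∂μ) / μ A := by
  set δ' : ℝ := sInf ((fun x => dist O x) '' A) with hδ'
  have hδ'0 : 0 ≤ δ' := Real.sInf_nonneg (by rintro y ⟨x, -, rfl⟩; exact dist_nonneg)
  set a' : ℝ := (μ A).toReal with ha'
  have ha'pos : 0 < a' := ENNReal.toReal_pos hpos.ne' hfin.ne
  have haofReal : ENNReal.ofReal a' = μ A := ENNReal.ofReal_toReal hfin.ne
  set L : ℝ := δ' + a' with hL
  have hLpos : 0 < L := by positivity
  set T : Q → ENNReal := searchTime μ S with hT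
  -- Step 1: open version
  have key : ∀ t : ℝ, μ (A ∩ {x | T x < ENNReal.ofReal t}) ≤ ENNReal.ofReal (t - δ') := by
    intro t
    rcases Set.eq_empty_or_nonempty (A ∩ {x | T x < ENNReal.ofReal t}) with hB | hB
    · simp [hB]
    · set P : ℚ → Prop := fun q => 0 ≤ (q : ℝ) ∧ ENNReal.ofReal (q : ℝ) < μ Set.univ ∧
        (q : ℝ) < t with hP
      have hmem : ∀ x ∈ A ∩ {x | T x < ENNReal.ofReal t}, ∃ q : ℚ, P q ∧ x ∈ S (q : ℝ) := by
        rintro x ⟨hxA, hxT⟩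
        simp only [Set.mem_setOf_eq, hT, searchTime, iInf_lt_iff] at hxT
        obtain ⟨s, ⟨hs0, hsμ, hxs⟩, hslt⟩ := hxT
        have h0t : 0 < t := by
          by_contra h
          rw [not_lt] at h
          simp [ENNReal.ofReal_eq_zero.2 h] at hslt
        have hst : s < t := (ENNReal.ofReal_lt_ofReal_iff h0t).1 hslt
        rcases eq_top_or_lt_top (μ Set.univ) with htop | htop
        · obtain ⟨q, hq1, hq2⟩ := exists_rat_btwn hst
          refine ⟨q, ⟨le_trans hs0 hq1.le, ?_, hq2⟩, hS.2.2 s q hs0 hq1.le ?_ hxs⟩ <;>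
            simp [htop]
        · have hs' : s < (μ Set.univ).toReal :=
            (ENNReal.ofReal_lt_iff_lt_toReal hs0 htop.ne).1 hsμ
          obtain ⟨q, hq1, hq2⟩ := exists_rat_btwn (lt_min hst hs')
          have hqμ : ENNReal.ofReal (q : ℝ) < μ Set.univ :=
            (ENNReal.ofReal_lt_iff_lt_toReal (le_trans hs0 hq1.le) htop.ne).2
              (lt_of_lt_of_le hq2 (min_le_right _ _))
          exact ⟨q, ⟨le_trans hs0 hq1.le, hqμ, lt_of_lt_of_le hq2 (min_le_left _ _)⟩,
            hS.2.2 s q hs0 hq1.le hqμ hxs⟩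
      have hsub : A ∩ {x | T x < ENNReal.ofReal t} ⊆
          ⋃ q : {q : ℚ // P q}, (S ((q : ℚ) : ℝ) ∩ A) := by
        intro x hx
        obtain ⟨q, hPq, hxq⟩ := hmem x hx
        exact Set.mem_iUnion.2 ⟨⟨q, hPq⟩, hxq, hx.1⟩
      have hdir : Directed (· ⊆ ·) (fun q : {q : ℚ // P q} => S ((q : ℚ) : ℝ) ∩ A) := by
        intro q1 q2
        rcases le_total (q1 : ℚ) (q2 : ℚ) with h | h
        · exact ⟨q2, Set.inter_subset_inter_left _
            (hS.2.2 _ _ q1.2.1 (by exact_mod_cast h) q2.2.2.1), subset_rfl⟩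
        · exact ⟨q1, subset_rfl, Set.inter_subset_inter_left _
            (hS.2.2 _ _ q2.2.1 (by exact_mod_cast h) q1.2.2.1)⟩
      calc μ (A ∩ {x | T x < ENNReal.ofReal t})
          ≤ μ (⋃ q : {q : ℚ // P q}, (S ((q : ℚ) : ℝ) ∩ A)) := measure_mono hsub
        _ = ⨆ q : {q : ℚ // P q}, μ (S ((q : ℚ) : ℝ) ∩ A) := hdir.measure_iUnion
        _ ≤ ENNReal.ofReal (t - δ') := by
            apply iSup_le
            rintro ⟨q, hq0, hqμ, hqt⟩
            rcases Set.eq_empty_or_nonempty (S ((q : ℚ) : ℝ) ∩ A) with he | hne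
            · simp [he]
            · have h1 := hδ ((q : ℚ) : ℝ) hq0 hqμ hne
              have h2 : μ (S ((q : ℚ) : ℝ) ∩ A) + μ (S ((q : ℚ) : ℝ) \ A)
                  = ENNReal.ofReal ((q : ℚ) : ℝ) := by
                rw [measure_inter_add_diff _ hA]
                exact (hS.2.1 _ hq0 hqμ).2.2
              have h3 : μ (S ((q : ℚ) : ℝ) ∩ A) ≤
                  ENNReal.ofReal ((q : ℚ) : ℝ) - ENNReal.ofReal δ' := by
                apply ENNReal.le_sub_of_add_le_right ENNReal.ofReal_ne_top
                calc μ (S ((q : ℚ) : ℝ) ∩ A) + ENNReal.ofReal δ'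
                    ≤ μ (S ((q : ℚ) : ℝ) ∩ A) + μ (S ((q : ℚ) : ℝ) \ A) :=
                      add_le_add le_rfl h1
                  _ = ENNReal.ofReal ((q : ℚ) : ℝ) := h2
              calc μ (S ((q : ℚ) : ℝ) ∩ A)
                  ≤ ENNReal.ofReal ((q : ℚ) : ℝ) - ENNReal.ofReal δ' := h3
                _ = ENNReal.ofReal (((q : ℚ) : ℝ) - δ') := (ENNReal.ofReal_sub _ hδ'0).symm
                _ ≤ ENNReal.ofReal (t - δ') := ENNReal.ofReal_le_ofReal (by linarith)
  -- Step 2: closed version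
  have key2 : ∀ t : ℝ, 0 < t →
      μ.restrict A {x | T x ≤ ENNReal.ofReal t} ≤ ENNReal.ofReal (t - δ') := by
    intro t ht
    apply ENNReal.le_of_forall_pos_le_add
    intro ε hε _
    have hεR : (0 : ℝ) < (ε : ℝ) := hε
    have hsub : {x | T x ≤ ENNReal.ofReal t} ⊆ {x | T x < ENNReal.ofReal (t + ε)} := by
      intro x hx
      simp only [Set.mem_setOf_eq] at hx ⊢
      refine lt_of_le_of_lt hx ?_
      rw [ENNReal.ofReal_lt_ofReal_iff (by linarith)]
      linarith
    calc μ.restrict A {x | T x ≤ ENNReal.ofReal t}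
        ≤ μ.restrict A {x | T x < ENNReal.ofReal (t + ε)} := measure_mono hsub
      _ = μ (A ∩ {x | T x < ENNReal.ofReal (t + ε)}) := by
          rw [Measure.restrict_apply (measurableSet_lt hmeas measurable_const), Set.inter_comm]
      _ ≤ ENNReal.ofReal (t + ε - δ') := key _
      _ ≤ ENNReal.ofReal (t - δ') + ε := by
          rw [show t + (ε : ℝ) - δ' = (t - δ') + (ε : ℝ) by ring]
          calc ENNReal.ofReal ((t - δ') + (ε : ℝ))
              ≤ ENNReal.ofReal (t - δ') + ENNReal.ofReal (ε : ℝ) := ENNReal.ofReal_add_le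
            _ = ENNReal.ofReal (t - δ') + ε := by rw [ENNReal.ofReal_coe_nnreal]
  -- Step 3: tail lower bound
  have tail : ∀ t : ℝ, 0 < t →
      ENNReal.ofReal (a' - max (t - δ') 0) ≤ μ.restrict A {x | ENNReal.ofReal t < T x} := by
    intro t ht
    have hcompl : {x | ENNReal.ofReal t < T x} = {x | T x ≤ ENNReal.ofReal t}ᶜ := by
      ext x; simp [not_le]
    have hsplit : μ.restrict A {x | T x ≤ ENNReal.ofReal t}
        + μ.restrict A {x | ENNReal.ofReal t < T x} = μ A := by
      rw [hcompl, measure_add_measure_compl (measurableSet_le hmeas measurable_const),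
        Measure.restrict_apply_univ]
    have hfinle : μ.restrict A {x | T x ≤ ENNReal.ofReal t} ≠ ⊤ :=
      (lt_of_le_of_lt (le_trans (measure_mono (Set.subset_univ _))
        (le_of_eq (Measure.restrict_apply_univ _))) hfin).ne
    have heq : μ.restrict A {x | ENNReal.ofReal t < T x}
        = μ A - μ.restrict A {x | T x ≤ ENNReal.ofReal t} := by
      rw [← hsplit, add_comm]
      exact (ENNReal.eq_sub_of_add_eq hfinle rfl)
    rw [heq]
    have hle : μ.restrict A {x | T x ≤ ENNReal.ofReal t} ≤ ENNReal.ofReal (max (t - δ') 0) :=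
      le_trans (key2 t ht) (ENNReal.ofReal_le_ofReal (le_max_left _ _))
    calc ENNReal.ofReal (a' - max (t - δ') 0)
        = ENNReal.ofReal a' - ENNReal.ofReal (max (t - δ') 0) :=
          ENNReal.ofReal_sub _ (le_max_right _ _)
      _ ≤ μ A - μ.restrict A {x | T x ≤ ENNReal.ofReal t} :=
          tsub_le_tsub (le_of_eq haofReal) hle
  -- Step 4: layercake
  set g : Q → ℝ := fun x => (min (T x) (ENNReal.ofReal L)).toReal with hg
  have hfin' : ∀ x, min (T x) (ENNReal.ofReal L) ≠ ⊤ :=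
    fun x => (lt_of_le_of_lt (min_le_right _ _) ENNReal.ofReal_lt_top).ne
  have hgmeas : Measurable g := (hmeas.min measurable_const).ennreal_toReal
  have h1 : ∫⁻ x in A, ENNReal.ofReal (g x) ∂μ ≤ ∫⁻ x in A, T x ∂μ := by
    apply lintegral_mono
    intro x
    dsimp only [hg]
    rw [ENNReal.ofReal_toReal (hfin' x)]
    exact min_le_left _ _
  have h2 : ∫⁻ x in A, ENNReal.ofReal (g x) ∂μ
      = ∫⁻ s in Set.Ioi (0 : ℝ), μ.restrict A {x | s < g x} :=
    lintegral_eq_lintegral_meas_lt _ (Filter.Eventually.of_forall fun x => ENNReal.toReal_nonneg)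
      hgmeas.aemeasurable
  have hseteq : ∀ s ∈ Set.Ioo (0 : ℝ) L,
      {x | s < g x} = {x | ENNReal.ofReal s < T x} := by
    intro s hs
    ext x
    simp only [hg, Set.mem_setOf_eq]
    rw [← ENNReal.ofReal_lt_iff_lt_toReal hs.1.le (hfin' x), lt_min_iff,
      and_iff_left ((ENNReal.ofReal_lt_ofReal_iff hLpos).2 hs.2)]
  have h3 : ∫⁻ s in Set.Ioo (0 : ℝ) L, ENNReal.ofReal (a' - max (s - δ') 0)
      ≤ ∫⁻ s in Set.Ioi (0 : ℝ), μ.restrict A {x | s < g x} := by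
    refine le_trans ?_ (lintegral_mono_set (Set.Ioo_subset_Ioi_self : Set.Ioo (0 : ℝ) L ⊆ Set.Ioi 0))
    apply lintegral_mono_ae
    refine ae_restrict_of_forall_mem measurableSet_Ioo ?_
    intro s hs
    rw [hseteq s hs]
    exact tail s hs.1
  -- Step 5: compute the explicit integral
  have hcont : Continuous (fun s : ℝ => a' - max (s - δ') 0) :=
    continuous_const.sub ((continuous_id.sub continuous_const).max continuous_const)
  have h4 : ∫⁻ s in Set.Ioo (0 : ℝ) L, ENNReal.ofReal (a' - max (s - δ') 0)
      = ENNReal.ofReal (δ' * a' + a' * a' / 2) := by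
    rw [← ofReal_integral_eq_lintegral_ofReal]
    · congr 1
      rw [← MeasureTheory.integral_Ioc_eq_integral_Ioo,
        ← intervalIntegral.integral_of_le hLpos.le]
      have hsplit := intervalIntegral.integral_add_adjacent_intervals (μ := volume)
        (a := (0:ℝ)) (b := δ') (c := L) (f := fun s => a' - max (s - δ') 0)
        (hcont.intervalIntegrable _ _) (hcont.intervalIntegrable _ _)
      rw [← hsplit]
      have e1 : ∫ s in (0:ℝ)..δ', (a' - max (s - δ') 0) = δ' * a' := by
        rw [intervalIntegral.integral_congr (g := fun _ => a') ?_]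
        · simp [mul_comm]
        · intro s hs
          rw [Set.uIcc_of_le hδ'0] at hs
          simp only
          rw [max_eq_right (by linarith [hs.2])]
          ring
      have e2 : ∫ s in δ'..L, (a' - max (s - δ') 0) = a' * a' / 2 := by
        rw [intervalIntegral.integral_congr (g := fun s => a' + δ' - s) ?_]
        · rw [intervalIntegral.integral_sub (intervalIntegrable_const) intervalIntegral.intervalIntegrable_id]
          rw [intervalIntegral.integral_const, integral_id]
          simp only [smul_eq_mul, hL]
          ring
        · intro s hs
          rw [Set.uIcc_of_le (by linarith : δ' ≤ L)] at hs
          simp only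
          rw [max_eq_left (by linarith [hs.1])]
          ring
      rw [e1, e2]
    · exact ((hcont.integrableOn_Icc).mono_set Set.Ioo_subset_Icc_self)
    · refine ae_restrict_of_forall_mem measurableSet_Ioo ?_
      intro s hs
      show (0:ℝ) ≤ a' - max (s - δ') 0
      rcases le_or_gt (s - δ') 0 with h | h
      · rw [max_eq_right h]; linarith
      · rw [max_eq_left h.le]; simp only [hL] at hs; linarith [hs.2]
  -- Final assembly
  rw [ENNReal.le_div_iff_mul_le (Or.inl hpos.ne') (Or.inl hfin.ne)]
  have hfactor : (ENNReal.ofReal δ' + μ A / 2) * μ A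
      = ENNReal.ofReal (δ' * a' + a' * a' / 2) := by
    rw [ENNReal.ofReal_add (by positivity) (by positivity), ENNReal.ofReal_mul hδ'0,
      ENNReal.ofReal_div_of_pos two_pos, ENNReal.ofReal_mul ha'pos.le, haofReal,
      ENNReal.ofReal_ofNat, add_mul, div_eq_mul_inv, div_eq_mul_inv, mul_right_comm]
  calc (ENNReal.ofReal δ' + μ A / 2) * μ A
      = ENNReal.ofReal (δ' * a' + a' * a' / 2) := hfactor
    _ = ∫⁻ s in Set.Ioo (0 : ℝ) L, ENNReal.ofReal (a' - max (s - δ') 0) := h4.symm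
    _ ≤ ∫⁻ s in Set.Ioi (0 : ℝ), μ.restrict A {x | s < g x} := h3
    _ = ∫⁻ x in A, ENNReal.ofReal (g x) ∂μ := h2.symm
    _ ≤ ∫⁻ x in A, T x ∂μ := h1
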